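/- For any positive integer k, the sequence r defined by r(1) = 0, r(k) = 3k/2 + r(k/2) if k is even, and r(k) = 2 + 3(k−1)/2 + r((k+1)/2) if k ≠ 1 is odd, satisfies r(k) ≤ 3(2^⌈log₂ k⌉ − 1) < 6k − 3. -/

import Mathlib

noncomputable section

/-- The ReLU activation function. -/
def relu (x : ℝ) : ℝ := max 0 x

/-- A ReLU network with `hidden` hidden layers (i.e. `hidden + 1` layers in total),
layer dimensions `k 0, k 1, …, k (hidden + 1)`, weight matrices `W i` and biases `b i`. -/
structure ReLUNet where
  hidden : ℕ
  k : ℕ → ℕ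
  W : (i : ℕ) → Matrix (Fin (k (i + 1))) (Fin (k i)) ℝ
  b : (i : ℕ) → Fin (k (i + 1)) → ℝ

namespace ReLUNet

/-- The output of the `(i+1)`-st affine layer: `h 1 (x) = W 1 x + b 1` and
`h (i+1) (x) = W (i+1) σ (h i (x)) + b (i+1)`. -/
def layerOut (N : ReLUNet) : (i : ℕ) → (Fin (N.k 0) → ℝ) → Fin (N.k (i + 1)) → ℝ
  | 0, x => (N.W 0).mulVec x + N.b 0
  | i + 1, x => (N.W (i + 1)).mulVec (fun j => relu (N.layerOut i x j)) + N.b (i + 1)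

/-- The input-output function of the network. -/
def eval (N : ReLUNet) : (Fin (N.k 0) → ℝ) → Fin (N.k (N.hidden + 1)) → ℝ :=
  N.layerOut N.hidden

/-- The number of layers of the network. -/
def depth (N : ReLUNet) : ℕ := N.hidden + 1

/-- The number of hidden neurons of the network. -/
def numHiddenNeurons (N : ReLUNet) : ℕ := ∑ i ∈ Finset.Icc 1 N.hidden, N.k i

/-- The maximum width (maximum number of neurons over all hidden layers; `0` if none). -/
def maxWidth (N : ReLUNet) : ℕ := (Finset.Icc 1 N.hidden).sup N.k

/-- The network `N` exactly represents the function `f : ℝⁿ → ℝᵐ`. -/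
def Computes (N : ReLUNet) {n m : ℕ} (f : (Fin n → ℝ) → Fin m → ℝ) : Prop :=
  ∃ (h0 : N.k 0 = n) (h1 : N.k (N.hidden + 1) = m),
    ∀ (x : Fin n → ℝ) (j : Fin (N.k (N.hidden + 1))),
      N.eval (fun i => x (Fin.cast h0 i)) j = f x (Fin.cast h1 j)

/-- The network `N` exactly represents the scalar-valued function `f : ℝⁿ → ℝ`. -/
def ComputesScalar (N : ReLUNet) {n : ℕ} (f : (Fin n → ℝ) → ℝ) : Prop :=
  N.Computes fun x (_ : Fin 1) => f x

end ReLUNet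

/-- `f : ℝⁿ → ℝ` is an affine function. -/
def IsAffineFn {n : ℕ} (f : (Fin n → ℝ) → ℝ) : Prop :=
  ∃ (a : Fin n → ℝ) (c : ℝ), ∀ x, f x = (∑ i, a i * x i) + c

/-- `p` agrees with some affine function on the set `X`. -/
def AffineOnSet {n : ℕ} (p : (Fin n → ℝ) → ℝ) (X : Set (Fin n → ℝ)) : Prop :=
  ∃ f, IsAffineFn f ∧ ∀ x ∈ X, p x = f x

/-- `X` is a finite family of closed subsets of `ℝⁿ` covering `ℝⁿ` on each of which `p` is
affine (the CPWL definition). -/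
def IsCPWLFamily {n I : ℕ} (p : (Fin n → ℝ) → ℝ) (X : Fin I → Set (Fin n → ℝ)) : Prop :=
  (∀ i, IsClosed (X i)) ∧ (⋃ i, X i) = Set.univ ∧ ∀ i, AffineOnSet p (X i)

/-- A family of pieces: closed convex subsets satisfying the CPWL definition. -/
def IsPieceFamily {n I : ℕ} (p : (Fin n → ℝ) → ℝ) (X : Fin I → Set (Fin n → ℝ)) : Prop :=
  IsCPWLFamily p X ∧ ∀ i, Convex ℝ (X i)

/-- `p` is CPWL with (minimum) number of pieces `q`. -/
def HasPieces {n : ℕ} (p : (Fin n → ℝ) → ℝ) (q : ℕ) : Prop :=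
  (∃ X : Fin q → Set (Fin n → ℝ), IsPieceFamily p X) ∧
  ∀ (q' : ℕ) (X : Fin q' → Set (Fin n → ℝ)), IsPieceFamily p X → q ≤ q'

/-- A family of closed subsets satisfying the CPWL definition with minimum cardinality. -/
def IsMinimalClosedFamily {n I : ℕ} (p : (Fin n → ℝ) → ℝ)
    (X : Fin I → Set (Fin n → ℝ)) : Prop :=
  IsCPWLFamily p X ∧
  ∀ (I' : ℕ) (Y : Fin I' → Set (Fin n → ℝ)), IsCPWLFamily p Y → I ≤ I'

/-- `f` is a linear component of `p`: `f` is affine and agrees with `p` on the union of a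
nonempty subfamily of a minimal family of closed subsets satisfying the CPWL definition. -/
def IsLinearComponent {n : ℕ} (p f : (Fin n → ℝ) → ℝ) : Prop :=
  IsAffineFn f ∧
  ∃ (I : ℕ) (X : Fin I → Set (Fin n → ℝ)), IsMinimalClosedFamily p X ∧
    ∃ M : Finset (Fin I), M.Nonempty ∧ ∀ i ∈ M, ∀ x ∈ X i, f x = p x

/-- `p` has exactly `k` distinct linear components. -/
def HasLinearComponents {n : ℕ} (p : (Fin n → ℝ) → ℝ) (k : ℕ) : Prop :=
  {f | IsLinearComponent p f}.Finite ∧ {f | IsLinearComponent p f}.ncard = k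

/-- `φ(n, k) = min (∑_{i=0}^n C((k² − k)/2, i), k!)`. -/
def phi (n k : ℕ) : ℕ :=
  min (∑ i ∈ Finset.range (n + 1), Nat.choose ((k ^ 2 - k) / 2) i) (Nat.factorial k)

/-- A family of closed connected subsets of `ℝⁿ` covering `ℝⁿ` on each of which `p` is affine. -/
def IsConnFamily {n I : ℕ} (p : (Fin n → ℝ) → ℝ) (X : Fin I → Set (Fin n → ℝ)) : Prop :=
  (∀ i, IsClosed (X i)) ∧ (∀ i, IsConnected (X i)) ∧ (⋃ i, X i) = Set.univ ∧
    ∀ i, AffineOnSet p (X i)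

/-- A family of closed connected subsets satisfying the CPWL definition whose cardinality is
minimal among all such families (Assumption 1). -/
def IsMinConnFamily {n I : ℕ} (p : (Fin n → ℝ) → ℝ) (X : Fin I → Set (Fin n → ℝ)) : Prop :=
  IsConnFamily p X ∧
  ∀ (I' : ℕ) (Y : Fin I' → Set (Fin n → ℝ)), IsConnFamily p Y → I ≤ I'

/-- The sequence `r` from the paper: `r 1 = 0`, `r k = 3k/2 + r (k/2)` for even `k`, and
`r k = 2 + 3(k−1)/2 + r ((k+1)/2)` for odd `k ≠ 1`. -/
def rseq : ℕ → ℕ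
  | 0 => 0
  | 1 => 0
  | k + 2 =>
    if (k + 2) % 2 = 0 then 3 * ((k + 2) / 2) + rseq ((k + 2) / 2)
    else 2 + 3 * ((k + 1) / 2) + rseq ((k + 3) / 2)
  decreasing_by all_goals omega

end
lemma rseq_le (k : ℕ) (hk : 0 < k) : rseq k ≤ 3 * (2 ^ Nat.clog 2 k - 1) := by
  induction k using Nat.strong_induction_on with
  | _ k ih =>
  match k, hk with
  | 1, _ => simp [rseq]
  | (n+2), _ =>
    have hj : 0 < (n+3)/2 := by omega
    have hjk : (n+3)/2 < n+2 := by omega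
    have h1 := ih _ hjk hj
    have hstep : rseq (n+2) ≤ 3 * ((n+3)/2) + rseq ((n+3)/2) := by
      rw [rseq]
      split
      · have : (n+2)/2 = (n+3)/2 := by omega
        rw [this]
      · have : (n+3)/2 = (n+1)/2 + 1 := by omega
        omega
    have hc : Nat.clog 2 (n+2) = Nat.clog 2 ((n+3)/2) + 1 := by
      rw [Nat.clog_of_two_le (by norm_num) (by omega)]
      congr 2
    have hle : (n+3)/2 ≤ 2 ^ Nat.clog 2 ((n+3)/2) := Nat.le_pow_clog (by norm_num) _
    have hpos : 1 ≤ 2 ^ Nat.clog 2 ((n+3)/2) := Nat.one_le_two_pow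
    rw [hc, pow_succ]
    omega

/-- **Lemma (upper bound for `r`).** For any positive integer `k`, the sequence `r` satisfies
`r(k) ≤ 3(2^⌈log₂ k⌉ − 1) < 6k − 3`. -/
theorem rseq_upper_bound (k : ℕ) (hk : 0 < k) :
    rseq k ≤ 3 * (2 ^ Nat.clog 2 k - 1) ∧ 3 * (2 ^ Nat.clog 2 k - 1) < 6 * k - 3 := by
  refine ⟨rseq_le k hk, ?_⟩
  rcases eq_or_lt_of_le (show 1 ≤ k from hk) with h | h
  · simp [← h]
  · have hc : 0 < Nat.clog 2 k := Nat.clog_pos (by norm_num) (by omega)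
    have h2 : 2 ^ (Nat.clog 2 k - 1) < k := Nat.pow_pred_clog_lt_self (by norm_num) (by omega)
    have : 2 ^ Nat.clog 2 k = 2 * 2 ^ (Nat.clog 2 k - 1) := by
      rw [← pow_succ']
      congr 1
      omega
    omega
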